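/- Under the smallness conditions v < 1 and v·‖Ã‖ < d₀(1−v)²/4, let X and X⁻ be the solutions (with norm at most r_min) of the basic equations for the contour datum and its conjugate, H := Ã + X, H⁻ := Ã + X⁻, and define Ω° := ∫ ζ(ω) · (((H⁻)* − ζ(ω))⁻¹ ∘ K(ω) ∘ (H − ζ(ω))⁻¹) dμ(ω). Then the Bochner integral defining Ω° converges, ‖Ω°‖ < 1 (so that I + Ω° is boundedly invertible), and the analogous operator Ω°⁻ built from the conjugate datum (with the roles of the two data interchanged) satisfies Ω°⁻ = (Ω°)*. -/
import Mathlib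


open MeasureTheory ContinuousLinearMap

/-- `X` solves the basic equation `X = V₁(Ã + X, Γ)` (with the Bochner integral
well defined). -/
def IsSolution {H : Type*} [NormedAddCommGroup H] [NormedSpace ℂ H] [CompleteSpace H]
    {Ω : Type*} [MeasurableSpace Ω] (μ : Measure Ω)
    (ζ : Ω → ℂ) (K : Ω → H →L[ℂ] H) (A X : H →L[ℂ] H) : Prop :=
  (∀ᵐ ω ∂μ, IsUnit (A + X - ζ ω • (1 : H →L[ℂ] H))) ∧
  Integrable (fun ω =>
    K ω ∘L ((A + X) ∘L Ring.inverse (A + X - ζ ω • (1 : H →L[ℂ] H)))) μ ∧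
  X = ∫ ω, K ω ∘L ((A + X) ∘L Ring.inverse (A + X - ζ ω • (1 : H →L[ℂ] H))) ∂μ

/-- The operator `Ω = ∫ ζ(ω) (Hl - ζ(ω))⁻¹ K(ω) (Hr - ζ(ω))⁻¹ dμ(ω)` of (4.8neu). -/
noncomputable def OmegaOp {H : Type*} [NormedAddCommGroup H] [NormedSpace ℂ H] [CompleteSpace H]
    {Ω : Type*} [MeasurableSpace Ω] (μ : Measure Ω)
    (ζ : Ω → ℂ) (K : Ω → H →L[ℂ] H) (Hl Hr : H →L[ℂ] H) : H →L[ℂ] H :=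
  ∫ ω, ζ ω • (Ring.inverse (Hl - ζ ω • (1 : H →L[ℂ] H)) ∘L
    (K ω ∘L Ring.inverse (Hr - ζ ω • (1 : H →L[ℂ] H)))) ∂μ

section Auxiliary

open Metric

variable {H : Type*} [NormedAddCommGroup H] [InnerProductSpace ℂ H] [CompleteSpace H]
variable {Ω : Type*} [MeasurableSpace Ω] {μ : Measure Ω}

/-- Resolvent bound for a selfadjoint operator. -/
lemma MHaux_res_norm_le (A : H →L[ℂ] H) (hA : IsSelfAdjoint A) (z : ℂ) (d : ℝ) (hd : 0 < d)
    (hdist : d ≤ infDist z (spectrum ℂ A)) :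
    IsUnit (A - z • (1 : H →L[ℂ] H)) ∧ ‖Ring.inverse (A - z • (1 : H →L[ℂ] H))‖ ≤ d⁻¹ := by
  have : IsStarNormal A := hA.isStarNormal
  have hz : ∀ x ∈ spectrum ℂ A, d ≤ dist z x := fun x hx =>
    hdist.trans (infDist_le_dist_of_mem hx)
  have hzs : z ∉ spectrum ℂ A := fun hmem => by
    have := hz z hmem
    simp at this
    linarith
  have h1 : A - z • (1 : H →L[ℂ] H) = cfc (fun x : ℂ => x - z) A := by
    rw [cfc_sub (fun x : ℂ => x) (fun _ : ℂ => z) A, cfc_id' ℂ A, cfc_const z A,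
      Algebra.algebraMap_eq_smul_one]
  have hne : ∀ x ∈ spectrum ℂ A, x - z ≠ 0 := fun x hx h => by
    rw [sub_eq_zero] at h
    exact hzs (h ▸ hx)
  constructor
  · rw [h1]
    exact isUnit_cfc _ A (by fun_prop) this hne
  · rw [h1, ← cfc_inv (fun x : ℂ => x - z) A hne]
    refine norm_cfc_le (by positivity) fun x hx => ?_
    rw [norm_inv]
    have := hz x hx
    rw [dist_eq_norm, norm_sub_rev] at this
    exact inv_anti₀ hd this

/-- Perturbation of a unit in a complete normed ring. -/
lemma MHaux_pert_isUnit {R : Type*} [NormedRing R] [CompleteSpace R] (hone : ‖(1 : R)‖ ≤ 1)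
    {B Y : R} (hB : IsUnit B) {m s : ℝ} (hm : ‖Ring.inverse B‖ ≤ m) (hY : ‖Y‖ ≤ s)
    (hms : m * s < 1) :
    IsUnit (B + Y) ∧ ‖Ring.inverse (B + Y)‖ ≤ m / (1 - m * s) := by
  obtain ⟨u, rfl⟩ := hB
  have hm' : ‖(↑u⁻¹ : R)‖ ≤ m := by rwa [Ring.inverse_unit] at hm
  have hm0 : 0 ≤ m := le_trans (norm_nonneg _) hm'
  have hs0 : 0 ≤ s := (norm_nonneg Y).trans hY
  set t : R := -(↑u⁻¹ * Y) with ht_def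
  have ht : ‖t‖ ≤ m * s := by
    rw [ht_def, norm_neg]
    exact (norm_mul_le _ _).trans (mul_le_mul hm' hY (norm_nonneg _) hm0)
  have ht1 : ‖t‖ < 1 := lt_of_le_of_lt ht hms
  set w : Rˣ := Units.oneSub t ht1 with hw_def
  have hval : ((u * w : Rˣ) : R) = ↑u + Y := by
    have : ((w : Rˣ) : R) = 1 + ↑u⁻¹ * Y := by
      show (1 : R) - t = _
      rw [ht_def, sub_neg_eq_add]
    rw [Units.val_mul, this, mul_add, mul_one, ← mul_assoc, u.mul_inv, one_mul]
  constructor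
  · exact ⟨u * w, hval⟩
  · have h1 : Ring.inverse (↑u + Y) = ((u * w)⁻¹ : Rˣ) := by
      rw [← hval, Ring.inverse_unit]
    have hwinv : ((w⁻¹ : Rˣ) : R) = ∑' n : ℕ, t ^ n := rfl
    have hw_norm : ‖((w⁻¹ : Rˣ) : R)‖ ≤ (1 - m * s)⁻¹ := by
      rw [hwinv]
      refine (tsum_geometric_le_of_norm_lt_one t ht1).trans ?_
      have h2 : (1 - ‖t‖)⁻¹ ≤ (1 - m * s)⁻¹ := by
        apply inv_anti₀ (by linarith) (by linarith)
      linarith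
    rw [h1, mul_inv_rev, Units.val_mul]
    calc ‖((w⁻¹ : Rˣ) : R) * ((u⁻¹ : Rˣ) : R)‖ ≤ ‖((w⁻¹ : Rˣ) : R)‖ * ‖((u⁻¹ : Rˣ) : R)‖ :=
          norm_mul_le _ _
      _ ≤ (1 - m * s)⁻¹ * m := by
          apply mul_le_mul hw_norm hm' (norm_nonneg _) (inv_nonneg.2 (by linarith))
      _ = m / (1 - m * s) := by rw [div_eq_mul_inv, mul_comm]

/-- Resolvent bound for a perturbed selfadjoint operator. -/
lemma MHaux_res_pert (A : H →L[ℂ] H) (hA : IsSelfAdjoint A) (W : H →L[ℂ] H) (z : ℂ) {r : ℝ}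
    (hW : ‖W‖ ≤ r) (hrt : r < infDist z (spectrum ℂ A)) :
    IsUnit (A + W - z • (1 : H →L[ℂ] H)) ∧
      ‖Ring.inverse (A + W - z • (1 : H →L[ℂ] H))‖ ≤ (infDist z (spectrum ℂ A) - r)⁻¹ := by
  set t := infDist z (spectrum ℂ A) with ht_def
  have hr0 : 0 ≤ r := (norm_nonneg W).trans hW
  have ht0 : 0 < t := lt_of_le_of_lt hr0 hrt
  obtain ⟨hu, hn⟩ := MHaux_res_norm_le A hA z t ht0 le_rfl
  have hone : ‖(1 : H →L[ℂ] H)‖ ≤ 1 := by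
    rw [ContinuousLinearMap.one_def]
    exact ContinuousLinearMap.norm_id_le
  have hms : t⁻¹ * r < 1 := by
    rw [← div_eq_inv_mul]
    exact (div_lt_one ht0).2 hrt
  have heq : A + W - z • (1 : H →L[ℂ] H) = (A - z • (1 : H →L[ℂ] H)) + W := by abel
  obtain ⟨hu2, hn2⟩ := MHaux_pert_isUnit hone hu hn hW hms
  rw [heq]
  refine ⟨hu2, hn2.trans (le_of_eq ?_)⟩
  have htr : (0:ℝ) < t - r := by linarith
  rw [div_eq_iff (by nlinarith : (1 : ℝ) - t⁻¹ * r ≠ 0)]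
  field_simp

/-- Measurability of the resolvent along a measurable family of contour points. -/
lemma MHaux_meas_inv (Hl : H →L[ℂ] H) {ζ : Ω → ℂ} (hζ : Measurable ζ)
    (hae : ∀ᵐ ω ∂μ, IsUnit (Hl - ζ ω • (1 : H →L[ℂ] H))) :
    AEStronglyMeasurable (fun ω => Ring.inverse (Hl - ζ ω • (1 : H →L[ℂ] H))) μ := by
  set U : Set ℂ := {z | IsUnit (Hl - z • (1 : H →L[ℂ] H))} with hU_def
  have hcont : Continuous fun z : ℂ => Hl - z • (1 : H →L[ℂ] H) := by fun_prop
  have hUopen : IsOpen U := Units.isOpen.preimage hcont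
  have hg : ContinuousOn (fun z : ℂ => Ring.inverse (Hl - z • (1 : H →L[ℂ] H))) U := by
    intro z hz
    have h1 : ContinuousAt Ring.inverse (Hl - z • (1 : H →L[ℂ] H)) := by
      have := NormedRing.inverse_continuousAt hz.unit
      rwa [hz.unit_spec] at this
    exact (ContinuousAt.comp (x := z) h1 hcont.continuousAt).continuousWithinAt
  have hmem : ∀ᵐ z ∂(Measure.map ζ μ), z ∈ U :=
    (MeasureTheory.ae_map_iff hζ.aemeasurable hUopen.measurableSet).2 hae
  have h1 : AEStronglyMeasurable (fun z : ℂ => Ring.inverse (Hl - z • (1 : H →L[ℂ] H)))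
      (Measure.map ζ μ) := by
    have hsc : SecondCountableTopologyEither ℂ (H →L[ℂ] H) :=
      ⟨Or.inl inferInstance⟩
    rw [← Measure.restrict_eq_self_of_ae_mem hmem]
    exact hg.aestronglyMeasurable hUopen.measurableSet
  exact h1.comp_aemeasurable hζ.aemeasurable

lemma MHaux_arith_r (d₀ v a : ℝ) (hd₀ : 0 < d₀) (hv0 : 0 ≤ v) (hv1 : v < 1) (ha : 0 ≤ a)
    (hv2 : v * a < d₀ * (1 - v) ^ 2 / 4) :
    0 ≤ d₀ * (1 - v) / 2 - Real.sqrt (d₀ ^ 2 * (1 - v) ^ 2 / 4 - d₀ * v * a) ∧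
    d₀ * (1 - v) / 2 - Real.sqrt (d₀ ^ 2 * (1 - v) ^ 2 / 4 - d₀ * v * a) < d₀ ∧
    v * (d₀ * (d₀ + a)) <
      (d₀ - (d₀ * (1 - v) / 2 - Real.sqrt (d₀ ^ 2 * (1 - v) ^ 2 / 4 - d₀ * v * a))) ^ 2 := by
  have hD : 0 < d₀ ^ 2 * (1 - v) ^ 2 / 4 - d₀ * v * a := by nlinarith
  have hsq : Real.sqrt (d₀ ^ 2 * (1 - v) ^ 2 / 4 - d₀ * v * a) ^ 2
      = d₀ ^ 2 * (1 - v) ^ 2 / 4 - d₀ * v * a := Real.sq_sqrt hD.le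
  have hspos : 0 < Real.sqrt (d₀ ^ 2 * (1 - v) ^ 2 / 4 - d₀ * v * a) := Real.sqrt_pos.2 hD
  have hsle : Real.sqrt (d₀ ^ 2 * (1 - v) ^ 2 / 4 - d₀ * v * a) ≤ d₀ * (1 - v) / 2 := by
    rw [show d₀ * (1 - v) / 2 = Real.sqrt ((d₀ * (1 - v) / 2) ^ 2) from
      (Real.sqrt_sq (by nlinarith)).symm]
    exact Real.sqrt_le_sqrt (by nlinarith [mul_nonneg hd₀.le (mul_nonneg hv0 ha)])
  generalize hs : Real.sqrt (d₀ ^ 2 * (1 - v) ^ 2 / 4 - d₀ * v * a) = s at hsq hspos hsle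
  have hr0 : 0 ≤ d₀ * (1 - v) / 2 - s := by linarith
  have hrlt : d₀ * (1 - v) / 2 - s < d₀ * (1 - v) / 2 := by linarith
  have hrd : d₀ * (1 - v) / 2 - s < d₀ := by nlinarith [mul_nonneg hd₀.le hv0]
  refine ⟨hr0, hrd, ?_⟩
  nlinarith [hsq, mul_pos (sub_pos.2 hrd) (sub_pos.2 hrlt)]

lemma MHaux_arith_pt (d₀ r a t z kn : ℝ) (hd₀ : 0 < d₀) (hr0 : 0 ≤ r) (hrd : r < d₀)
    (ha : 0 ≤ a) (ht : d₀ ≤ t) (hz : z ≤ t + a) (hk : 0 ≤ kn) :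
    z * ((t - r)⁻¹ * (kn * (t - r)⁻¹)) ≤ (d₀ * (d₀ + a) / (d₀ - r) ^ 2) * (kn / t) := by
  have htr : (0:ℝ) < t - r := by linarith
  have hdr : (0:ℝ) < d₀ - r := by linarith
  have ht0 : (0:ℝ) < t := by linarith
  have h1 : (t + a) * t * (d₀ - r) ^ 2 ≤ d₀ * (d₀ + a) * (t - r) ^ 2 := by
    nlinarith [mul_nonneg (mul_nonneg (sub_nonneg.2 ht) hdr.le)
        (by nlinarith : (0:ℝ) ≤ a * d₀ + 2 * d₀ * r + a * r),
      mul_nonneg (sq_nonneg (t - d₀)) (by nlinarith : (0:ℝ) ≤ d₀ * a + 2 * d₀ * r - r ^ 2)]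
  have hb : z * ((t - r)⁻¹ * (kn * (t - r)⁻¹)) = z * kn / (t - r) ^ 2 := by
    rw [div_eq_mul_inv, sq, mul_inv]
    ring
  have hc : (d₀ * (d₀ + a) / (d₀ - r) ^ 2) * (kn / t)
      = d₀ * (d₀ + a) * kn / ((d₀ - r) ^ 2 * t) := div_mul_div_comm _ _ _ _
  rw [hb, hc, div_le_div_iff₀ (by positivity) (by positivity)]
  nlinarith [mul_le_mul_of_nonneg_right h1 hk, mul_le_mul_of_nonneg_right hz
    (mul_nonneg (mul_nonneg ht0.le (sq_nonneg (d₀ - r))) hk)]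

lemma MHaux_star_integrand (Hl Hr k : H →L[ℂ] H) (z : ℂ) :
    star (z • (Ring.inverse (Hl - z • (1 : H →L[ℂ] H)) ∘L
      (k ∘L Ring.inverse (Hr - z • (1 : H →L[ℂ] H))))) =
    (starRingEnd ℂ) z • (Ring.inverse (star Hr - (starRingEnd ℂ) z • (1 : H →L[ℂ] H)) ∘L
      (star k ∘L Ring.inverse (star Hl - (starRingEnd ℂ) z • (1 : H →L[ℂ] H)))) := by
  rw [star_smul, ← ContinuousLinearMap.mul_def, ← ContinuousLinearMap.mul_def,
    star_mul, star_mul, ← Ring.inverse_star, ← Ring.inverse_star, star_sub, star_smul,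
    star_one, star_sub, star_smul, star_one, mul_assoc, ContinuousLinearMap.mul_def,
    ContinuousLinearMap.mul_def, starRingEnd_apply]

end Auxiliary

set_option maxHeartbeats 1000000 in
/-- Properties (4.9) of Theorem `MHOmega`: the Bochner integral defining
`Ω° = ∫ ζ(ω) ((H⁻)* - ζ(ω))⁻¹ K(ω) (H - ζ(ω))⁻¹ dμ(ω)` converges, `‖Ω°‖ < 1`
(hence `I + Ω°` is boundedly invertible), and the analogous operator `Ω°⁻` of the
conjugate datum satisfies `Ω°⁻ = (Ω°)*`. -/
theorem OmegaOp_properties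
    {H : Type*} [NormedAddCommGroup H] [InnerProductSpace ℂ H] [CompleteSpace H]
    {Ω : Type*} [MeasurableSpace Ω] (μ : Measure Ω)
    (ζ : Ω → ℂ) (hζ : Measurable ζ)
    (K : Ω → H →L[ℂ] H) (hK : Integrable K μ)
    (A : H →L[ℂ] H) (hA : IsSelfAdjoint A)
    (d₀ : ℝ) (hd₀ : 0 < d₀)
    (hdist : ∀ᵐ ω ∂μ, d₀ ≤ Metric.infDist (ζ ω) (spectrum ℂ A))
    (hvInt : Integrable (fun ω => ‖K ω‖ / Metric.infDist (ζ ω) (spectrum ℂ A)) μ)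
    (v : ℝ) (hv : v = ∫ ω, ‖K ω‖ / Metric.infDist (ζ ω) (spectrum ℂ A) ∂μ)
    (hv1 : v < 1) (hv2 : v * ‖A‖ < d₀ * (1 - v) ^ 2 / 4)
    (X X' : H →L[ℂ] H)
    (hXnorm : ‖X‖ ≤ d₀ * (1 - v) / 2 -
      Real.sqrt (d₀ ^ 2 * (1 - v) ^ 2 / 4 - d₀ * v * ‖A‖))
    (hXsol : IsSolution μ ζ K A X)
    (hX'norm : ‖X'‖ ≤ d₀ * (1 - v) / 2 -
      Real.sqrt (d₀ ^ 2 * (1 - v) ^ 2 / 4 - d₀ * v * ‖A‖))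
    (hX'sol : IsSolution μ (fun ω => (starRingEnd ℂ) (ζ ω))
      (fun ω => ContinuousLinearMap.adjoint (K ω)) A X') :
    Integrable (fun ω => ζ ω •
      (Ring.inverse (ContinuousLinearMap.adjoint (A + X') - ζ ω • (1 : H →L[ℂ] H)) ∘L
        (K ω ∘L Ring.inverse (A + X - ζ ω • (1 : H →L[ℂ] H))))) μ ∧
    ‖OmegaOp μ ζ K (ContinuousLinearMap.adjoint (A + X')) (A + X)‖ < 1 ∧
    IsUnit ((1 : H →L[ℂ] H) + OmegaOp μ ζ K (ContinuousLinearMap.adjoint (A + X')) (A + X)) ∧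
    OmegaOp μ (fun ω => (starRingEnd ℂ) (ζ ω))
        (fun ω => ContinuousLinearMap.adjoint (K ω))
        (ContinuousLinearMap.adjoint (A + X)) (A + X') =
      ContinuousLinearMap.adjoint
        (OmegaOp μ ζ K (ContinuousLinearMap.adjoint (A + X')) (A + X)) := by
  classical
  rcases subsingleton_or_nontrivial H with hS | hN
  · have hsub : Subsingleton (H →L[ℂ] H) := inferInstance
    refine ⟨?_, ?_, isUnit_of_subsingleton _, Subsingleton.elim _ _⟩
    · have h0 : (fun ω => ζ ω •
          (Ring.inverse (ContinuousLinearMap.adjoint (A + X') - ζ ω • (1 : H →L[ℂ] H)) ∘L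
            (K ω ∘L Ring.inverse (A + X - ζ ω • (1 : H →L[ℂ] H)))))
          = fun _ => (0 : H →L[ℂ] H) := funext fun ω => Subsingleton.elim _ _
      rw [h0]
      exact integrable_zero _ _ _
    · have h0 : OmegaOp μ ζ K (ContinuousLinearMap.adjoint (A + X')) (A + X) = 0 :=
        Subsingleton.elim _ _
      rw [h0, norm_zero]
      exact one_pos
  -- main case
  have hv0 : 0 ≤ v := by
    rw [hv]
    exact integral_nonneg fun ω => div_nonneg (norm_nonneg _) Metric.infDist_nonneg
  obtain ⟨hr0, hrd, hkey⟩ := MHaux_arith_r d₀ v ‖A‖ hd₀ hv0 hv1 (norm_nonneg A) hv2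
  set rr : ℝ := d₀ * (1 - v) / 2 - Real.sqrt (d₀ ^ 2 * (1 - v) ^ 2 / 4 - d₀ * v * ‖A‖)
    with hrr_def
  set c₀ : ℝ := d₀ * (d₀ + ‖A‖) / (d₀ - rr) ^ 2 with hc₀_def
  have hdrpos : (0:ℝ) < (d₀ - rr) ^ 2 := by
    have : (0:ℝ) < d₀ - rr := by linarith
    positivity
  have hc₀0 : 0 ≤ c₀ := by
    rw [hc₀_def]
    exact div_nonneg (by positivity) (sq_nonneg _)
  have hc₀v : c₀ * v < 1 := by
    rw [hc₀_def, div_mul_eq_mul_div, div_lt_one hdrpos, mul_comm]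
    exact hkey
  -- spectrum is nonempty
  have hCLMnt : Nontrivial (H →L[ℂ] H) := by
    obtain ⟨x, hx⟩ := exists_ne (0 : H)
    refine ⟨⟨0, 1, fun h => hx ?_⟩⟩
    have := congrArg (fun T : H →L[ℂ] H => T x) h
    simpa using this.symm
  have hspec : (spectrum ℂ A).Nonempty := spectrum.nonempty A
  -- bound on |ζ ω|
  have hzeta : ∀ ω : Ω, ‖ζ ω‖ ≤ Metric.infDist (ζ ω) (spectrum ℂ A) + ‖A‖ := by
    intro ω
    have h1 : ‖ζ ω‖ - ‖A‖ ≤ Metric.infDist (ζ ω) (spectrum ℂ A) := by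
      by_contra hlt
      push_neg at hlt
      obtain ⟨y, hy, hdy⟩ := (Metric.infDist_lt_iff hspec).1 hlt
      have h2 : ‖y‖ ≤ ‖A‖ := spectrum.norm_le_norm_of_mem hy
      have h3 : ‖ζ ω‖ - ‖y‖ ≤ ‖ζ ω - y‖ := norm_sub_norm_le _ _
      rw [dist_eq_norm] at hdy
      linarith
    linarith
  set Hl : H →L[ℂ] H := ContinuousLinearMap.adjoint (A + X') with hHl_def
  have hHl : Hl = A + ContinuousLinearMap.adjoint X' := by
    rw [hHl_def, map_add, hA.adjoint_eq]
  have hX'adj : ‖ContinuousLinearMap.adjoint X'‖ ≤ rr := by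
    rw [← ContinuousLinearMap.star_eq_adjoint, norm_star]
    exact hX'norm
  -- a.e. facts
  have hfacts : ∀ᵐ ω ∂μ,
      (IsUnit (Hl - ζ ω • (1 : H →L[ℂ] H)) ∧
        ‖Ring.inverse (Hl - ζ ω • (1 : H →L[ℂ] H))‖ ≤
          (Metric.infDist (ζ ω) (spectrum ℂ A) - rr)⁻¹) ∧
      (IsUnit (A + X - ζ ω • (1 : H →L[ℂ] H)) ∧
        ‖Ring.inverse (A + X - ζ ω • (1 : H →L[ℂ] H))‖ ≤
          (Metric.infDist (ζ ω) (spectrum ℂ A) - rr)⁻¹) := by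
    filter_upwards [hdist] with ω hω
    have hrt : rr < Metric.infDist (ζ ω) (spectrum ℂ A) := lt_of_lt_of_le hrd hω
    constructor
    · rw [hHl]
      exact MHaux_res_pert A hA (ContinuousLinearMap.adjoint X') (ζ ω) hX'adj hrt
    · exact MHaux_res_pert A hA X (ζ ω) hXnorm hrt
  -- measurability
  have hmeasP : AEStronglyMeasurable
      (fun ω => Ring.inverse (Hl - ζ ω • (1 : H →L[ℂ] H))) μ :=
    MHaux_meas_inv Hl hζ (hfacts.mono fun ω h => h.1.1)
  have hmeasQ : AEStronglyMeasurable
      (fun ω => Ring.inverse (A + X - ζ ω • (1 : H →L[ℂ] H))) μ :=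
    MHaux_meas_inv (A + X) hζ (hfacts.mono fun ω h => h.2.1)
  have hfm : AEStronglyMeasurable (fun ω => ζ ω •
      (Ring.inverse (Hl - ζ ω • (1 : H →L[ℂ] H)) ∘L
        (K ω ∘L Ring.inverse (A + X - ζ ω • (1 : H →L[ℂ] H))))) μ := by
    simp only [← ContinuousLinearMap.mul_def]
    exact (hζ.aestronglyMeasurable).smul
      (hmeasP.mul (hK.aestronglyMeasurable.mul hmeasQ))
  -- pointwise bound
  have hbound : ∀ᵐ ω ∂μ, ‖ζ ω •
      (Ring.inverse (Hl - ζ ω • (1 : H →L[ℂ] H)) ∘L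
        (K ω ∘L Ring.inverse (A + X - ζ ω • (1 : H →L[ℂ] H))))‖ ≤
      c₀ * (‖K ω‖ / Metric.infDist (ζ ω) (spectrum ℂ A)) := by
    filter_upwards [hfacts, hdist] with ω h1 h2
    set t := Metric.infDist (ζ ω) (spectrum ℂ A) with ht_def
    have htr : (0:ℝ) < t - rr := by
      have : rr < d₀ := hrd
      linarith
    calc ‖ζ ω • (Ring.inverse (Hl - ζ ω • (1 : H →L[ℂ] H)) ∘L
          (K ω ∘L Ring.inverse (A + X - ζ ω • (1 : H →L[ℂ] H))))‖
        ≤ ‖ζ ω‖ * ((t - rr)⁻¹ * (‖K ω‖ * (t - rr)⁻¹)) := by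
          rw [norm_smul]
          apply mul_le_mul_of_nonneg_left _ (norm_nonneg (ζ ω))
          calc ‖Ring.inverse (Hl - ζ ω • (1 : H →L[ℂ] H)) ∘L
                (K ω ∘L Ring.inverse (A + X - ζ ω • (1 : H →L[ℂ] H)))‖
              ≤ ‖Ring.inverse (Hl - ζ ω • (1 : H →L[ℂ] H))‖ *
                ‖K ω ∘L Ring.inverse (A + X - ζ ω • (1 : H →L[ℂ] H))‖ :=
                ContinuousLinearMap.opNorm_comp_le _ _
            _ ≤ (t - rr)⁻¹ * (‖K ω‖ * (t - rr)⁻¹) := by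
                apply mul_le_mul h1.1.2
                · exact (ContinuousLinearMap.opNorm_comp_le _ _).trans
                    (mul_le_mul_of_nonneg_left h1.2.2 (norm_nonneg _))
                · exact norm_nonneg _
                · exact inv_nonneg.2 htr.le
      _ ≤ c₀ * (‖K ω‖ / t) :=
          MHaux_arith_pt d₀ rr ‖A‖ t ‖ζ ω‖ ‖K ω‖ hd₀ hr0 hrd (norm_nonneg A) h2
            (hzeta ω) (norm_nonneg _)
  -- integrability
  have hInt : Integrable (fun ω => ζ ω •
      (Ring.inverse (Hl - ζ ω • (1 : H →L[ℂ] H)) ∘L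
        (K ω ∘L Ring.inverse (A + X - ζ ω • (1 : H →L[ℂ] H))))) μ :=
    (hvInt.const_mul c₀).mono' hfm hbound
  have hnormlt : ‖OmegaOp μ ζ K Hl (A + X)‖ < 1 := by
    have h2 : ‖OmegaOp μ ζ K Hl (A + X)‖ ≤ ∫ ω, ‖ζ ω •
        (Ring.inverse (Hl - ζ ω • (1 : H →L[ℂ] H)) ∘L
          (K ω ∘L Ring.inverse (A + X - ζ ω • (1 : H →L[ℂ] H))))‖ ∂μ := by
      rw [OmegaOp]
      exact norm_integral_le_integral_norm _
    have h3 : (∫ ω, ‖ζ ω •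
        (Ring.inverse (Hl - ζ ω • (1 : H →L[ℂ] H)) ∘L
          (K ω ∘L Ring.inverse (A + X - ζ ω • (1 : H →L[ℂ] H))))‖ ∂μ) ≤
        ∫ ω, c₀ * (‖K ω‖ / Metric.infDist (ζ ω) (spectrum ℂ A)) ∂μ :=
      integral_mono_ae hInt.norm (hvInt.const_mul c₀) hbound
    have h4 : (∫ ω, c₀ * (‖K ω‖ / Metric.infDist (ζ ω) (spectrum ℂ A)) ∂μ) = c₀ * v := by
      rw [integral_const_mul, ← hv]
    calc ‖OmegaOp μ ζ K Hl (A + X)‖ ≤ c₀ * v := by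
          rw [← h4]; exact h2.trans h3
      _ < 1 := hc₀v
  refine ⟨hInt, hnormlt, ?_, ?_⟩
  · have h5 : ‖-OmegaOp μ ζ K Hl (A + X)‖ < 1 := by rwa [norm_neg]
    have h6 := isUnit_one_sub_of_norm_lt_one h5
    rwa [sub_neg_eq_add] at h6
  · have hstar : star (OmegaOp μ ζ K Hl (A + X)) = ∫ ω, star (ζ ω •
        (Ring.inverse (Hl - ζ ω • (1 : H →L[ℂ] H)) ∘L
          (K ω ∘L Ring.inverse (A + X - ζ ω • (1 : H →L[ℂ] H))))) ∂μ := by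
      have hcomm := ((starL' ℝ : (H →L[ℂ] H) ≃L[ℝ] (H →L[ℂ] H)).toContinuousLinearMap
        ).integral_comp_comm hInt
      rw [OmegaOp]
      simpa using hcomm.symm
    have hHlstar : star Hl = A + X' := by
      rw [hHl_def, ← ContinuousLinearMap.star_eq_adjoint, star_star]
    rw [show ContinuousLinearMap.adjoint (OmegaOp μ ζ K Hl (A + X)) =
        star (OmegaOp μ ζ K Hl (A + X)) from
        (ContinuousLinearMap.star_eq_adjoint _).symm, hstar, OmegaOp]
    refine integral_congr_ae (Filter.Eventually.of_forall fun ω => ?_)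
    beta_reduce
    rw [MHaux_star_integrand, hHlstar, ContinuousLinearMap.star_eq_adjoint,
      ContinuousLinearMap.star_eq_adjoint]
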